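/- Let A be the (2p+1)-dimensional commutative algebra over a field K of characteristic ≠ 2 with basis {e_0,…,e_{2p}} and products e_0² = e_0, e_0e_i = ½e_i (1 ≤ i ≤ 2p−1), e_0e_{2p} = e_{2p}, e_i e_{2p−i} = ½(−1)^i e_{2p} (1 ≤ i ≤ p), all other products zero. Then A is a Jordan algebra satisfying the train equation x³ − 2ω(x)x² + ω(x)²x = 0, where ω is the algebra homomorphism with ω(e_0) = 1, ω(e_i) = 0 for i ≥ 1. -/

import Mathlib

/-- The (2p+1)-dimensional algebra with e_0² = e_0, e_0e_i = ½e_i (1 ≤ i ≤ 2p−1),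
e_0e_{2p} = e_{2p}, e_ie_{2p−i} = ½(−1)^i e_{2p} (1 ≤ i ≤ p) and all other products
zero is a Jordan algebra satisfying the train equation x³ − 2ω(x)x² + ω(x)²x = 0,
where ω is the weight homomorphism with ω(e_0) = 1, ω(e_i) = 0 for i ≥ 1. -/
theorem rank3_train_jordan {K A : Type*} [Field K]
    [NonUnitalNonAssocCommRing A] [Module K A] [SMulCommClass K A A] [IsScalarTower K A A]
    (h2 : (2 : K) ≠ 0) (p : ℕ) (hp : 1 ≤ p)
    (e : Module.Basis (Fin (2 * p + 1)) K A)
    (h00 : e 0 * e 0 = e 0)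
    (h0i : ∀ i : Fin (2 * p + 1), 1 ≤ (i : ℕ) → (i : ℕ) ≤ 2 * p - 1 →
      e 0 * e i = (2 : K)⁻¹ • e i)
    (h0top : e 0 * e ⟨2 * p, Nat.lt_succ_self _⟩ = e ⟨2 * p, Nat.lt_succ_self _⟩)
    (hpair : ∀ i j : Fin (2 * p + 1), 1 ≤ (i : ℕ) → 1 ≤ (j : ℕ) →
      (i : ℕ) + (j : ℕ) = 2 * p →
      e i * e j = ((2 : K)⁻¹ * (-1 : K) ^ (i : ℕ)) • e ⟨2 * p, Nat.lt_succ_self _⟩)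
    (hzero : ∀ i j : Fin (2 * p + 1), 1 ≤ (i : ℕ) → 1 ≤ (j : ℕ) →
      (i : ℕ) + (j : ℕ) ≠ 2 * p → e i * e j = 0) :
    (∀ x y : A, (x * x) * (y * x) = ((x * x) * y) * x) ∧
    ∃ ω : A →ₗ[K] K, (∀ x y : A, ω (x * y) = ω x * ω y) ∧ ω (e 0) = 1 ∧
      (∀ i : Fin (2 * p + 1), 1 ≤ (i : ℕ) → ω (e i) = 0) ∧
      ∀ x : A, x * (x * x) - (2 * ω x) • (x * x) + (ω x * ω x) • x = 0 := by
  have h2' : (2:K)⁻¹ * 2 = 1 := inv_mul_cancel₀ h2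
  set tI : Fin (2*p+1) := ⟨2*p, Nat.lt_succ_self _⟩ with htI
  set t : A := e tI with ht
  set ω : A →ₗ[K] K := e.coord 0 with hωdef
  have hval0 : ((0 : Fin (2*p+1)) : ℕ) = 0 := Fin.val_zero _
  have htI0 : tI ≠ 0 := by
    intro h
    have := congrArg Fin.val h
    rw [hval0] at this
    simp only [htI] at this
    omega
  have hω_e : ∀ i : Fin (2*p+1), ω (e i) = if i = 0 then 1 else 0 := by
    intro i
    simp [hωdef, Module.Basis.coord_apply, Module.Basis.repr_self, Finsupp.single_apply]
  have hne1 : ∀ i : Fin (2*p+1), i ≠ 0 → 1 ≤ (i:ℕ) := by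
    intro i hi
    rcases Nat.eq_zero_or_pos (i:ℕ) with h | h
    · exact absurd (Fin.ext (by rw [h, hval0])) hi
    · exact h
  have hprod : ∀ i j : Fin (2*p+1), i ≠ 0 → j ≠ 0 → ∃ s : K, e i * e j = s • t := by
    intro i j hi hj
    by_cases hij : (i:ℕ) + (j:ℕ) = 2*p
    · exact ⟨_, hpair i j (hne1 i hi) (hne1 j hj) hij⟩
    · exact ⟨0, by rw [hzero i j (hne1 i hi) (hne1 j hj) hij, zero_smul]⟩
  have ht_mul : ∀ i : Fin (2*p+1), t * e i = ω (e i) • t := by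
    intro i
    rcases eq_or_ne i 0 with rfl | hi
    · rw [mul_comm, h0top, hω_e, if_pos rfl, one_smul]
    · rw [hzero tI i (by simp [htI]; omega) (hne1 i hi)
        (by simp only [htI]; have := hne1 i hi; omega), hω_e, if_neg hi, zero_smul]
  have hBmap : LinearMap.mulLeft K t = ω.smulRight t := by
    apply Module.Basis.ext e
    intro i
    simpa using ht_mul i
  have hB : ∀ x : A, t * x = ω x • t := by
    intro x
    simpa using LinearMap.congr_fun hBmap x
  -- ω is multiplicative
  have hCmap : (LinearMap.mul K A).compr₂ ω = (LinearMap.mul K K).compl₁₂ ω ω := by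
    apply Module.Basis.ext e
    intro i
    apply Module.Basis.ext e
    intro j
    simp only [LinearMap.compr₂_apply, LinearMap.mul_apply', LinearMap.compl₁₂_apply]
    rcases eq_or_ne i 0 with rfl | hi
    · rcases eq_or_ne j 0 with rfl | hj
      · rw [h00]; simp [hω_e]
      · rcases eq_or_ne j tI with rfl | hjt
        · rw [h0top]; simp [ht, hω_e, htI0]
        · have hj1 := hne1 j hj
          have hjlt : (j:ℕ) < 2*p + 1 := j.isLt
          have hjne : (j:ℕ) ≠ 2*p := fun h => hjt (Fin.ext (by simp [htI, h]))
          rw [h0i j hj1 (by omega)]; simp [hω_e, hj]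
    · rcases eq_or_ne j 0 with rfl | hj
      · rw [mul_comm (e i) (e 0)]
        rcases eq_or_ne i tI with rfl | hit
        · rw [h0top]; simp [ht, hω_e, htI0]
        · have hi1 := hne1 i hi
          have hilt : (i:ℕ) < 2*p + 1 := i.isLt
          have hine : (i:ℕ) ≠ 2*p := fun h => hit (Fin.ext (by simp [htI, h]))
          rw [h0i i hi1 (by omega)]; simp [hω_e, hi]
      · obtain ⟨s, hs⟩ := hprod i j hi hj
        rw [hs]; simp [ht, hω_e, hi, hj, htI0]
  have hC : ∀ x y : A, ω (x * y) = ω x * ω y := by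
    intro x y
    simpa using LinearMap.congr_fun (LinearMap.congr_fun hCmap x) y
  -- quotient by span {t}
  set Q : Submodule K A := Submodule.span K {t} with hQ
  set π : A →ₗ[K] A ⧸ Q := Q.mkQ with hπ
  have hπt : π t = 0 := by
    rw [hπ, Submodule.mkQ_apply, Submodule.Quotient.mk_eq_zero]
    exact Submodule.mem_span_singleton_self t
  have half2 : ∀ v : A ⧸ Q, (2:K)⁻¹ • (v + v) = v := by
    intro v
    rw [← two_smul K v, smul_smul, h2', one_smul]
  have hAmap : (LinearMap.mul K A).compr₂ π
      = (2:K)⁻¹ • (ω.smulRight π + (ω.smulRight π).flip) := by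
    apply Module.Basis.ext e
    intro i
    apply Module.Basis.ext e
    intro j
    simp only [LinearMap.compr₂_apply, LinearMap.mul_apply', LinearMap.smul_apply,
      LinearMap.add_apply, LinearMap.flip_apply, LinearMap.smulRight_apply]
    rcases eq_or_ne i 0 with rfl | hi
    · rcases eq_or_ne j 0 with rfl | hj
      · rw [h00, hω_e, if_pos rfl, one_smul, half2]
      · rcases eq_or_ne j tI with rfl | hjt
        · rw [h0top]; simp [hω_e, hj, hπt, ← ht, show ω t = 0 by rw [ht, hω_e, if_neg hj]]
        · have hj1 := hne1 j hj
          have hjlt : (j:ℕ) < 2*p + 1 := j.isLt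
          have hjne : (j:ℕ) ≠ 2*p := fun h => hjt (Fin.ext (by simp [htI, h]))
          rw [h0i j hj1 (by omega)]; simp [hω_e, hj]
    · rcases eq_or_ne j 0 with rfl | hj
      · rw [mul_comm (e i) (e 0)]
        rcases eq_or_ne i tI with rfl | hit
        · rw [h0top]; simp [hω_e, hi, hπt, ← ht, show ω t = 0 by rw [ht, hω_e, if_neg hi]]
        · have hi1 := hne1 i hi
          have hilt : (i:ℕ) < 2*p + 1 := i.isLt
          have hine : (i:ℕ) ≠ 2*p := fun h => hit (Fin.ext (by simp [htI, h]))
          rw [h0i i hi1 (by omega)]; simp [hω_e, hi]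
      · obtain ⟨s, hs⟩ := hprod i j hi hj
        rw [hs]; simp [hω_e, hi, hj, hπt]
  have hA : ∀ x : A, ∃ s : K, x * x = ω x • x + s • t := by
    intro x
    have hx := LinearMap.congr_fun (LinearMap.congr_fun hAmap x) x
    simp only [LinearMap.compr₂_apply, LinearMap.mul_apply', LinearMap.smul_apply,
      LinearMap.add_apply, LinearMap.flip_apply, LinearMap.smulRight_apply] at hx
    rw [half2] at hx
    have hmem : x * x - ω x • x ∈ Q := by
      have hz : π (x * x - ω x • x) = 0 := by
        rw [map_sub, map_smul, hx, sub_self]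
      rw [← Submodule.ker_mkQ Q]
      exact LinearMap.mem_ker.2 hz
    rw [hQ] at hmem
    obtain ⟨s, hsz⟩ := Submodule.mem_span_singleton.1 hmem
    exact ⟨s, by rw [hsz]; module⟩
  constructor
  · -- Jordan identity
    intro x y
    obtain ⟨s, hs⟩ := hA x
    have h1 : t * (y * x) = (ω y * ω x) • t := by rw [hB, hC]
    have h2t : (t * y) * x = (ω y * ω x) • t := by
      rw [hB y, smul_mul_assoc, hB x, smul_smul]
    have hassoc : x * (y * x) = (x * y) * x := by
      rw [mul_comm x (y * x), mul_comm x y]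
    rw [hs]
    simp only [add_mul, smul_mul_assoc]
    rw [h1, h2t, hassoc]
  · refine ⟨ω, hC, ?_, ?_, ?_⟩
    · rw [hω_e, if_pos rfl]
    · intro i hi
      rw [hω_e, if_neg]
      intro h
      rw [h, hval0] at hi
      omega
    · intro x
      obtain ⟨s, hs⟩ := hA x
      have hxt : x * t = ω x • t := by rw [mul_comm]; exact hB x
      have key : x * (x * x) = ω x • (x * x) + (s * ω x) • t := by
        conv_lhs => rw [hs]
        rw [mul_add, mul_smul_comm, mul_smul_comm, hxt, smul_smul]
      rw [key, hs]
      module
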